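/- Let τ be a distributive triangle function and γ a τ-decomposable measure. The γ-integral is positively homogeneous: for every c ∈ ℝ₊ and every γ-integrable f: Ω → [0,∞], ∫_E (c·f) dγ = c ⊙ ∫_E f dγ. -/

import Mathlib

open MeasureTheory Filter Set Topology

noncomputable section

/-- The distribution function of the Dirac measure at 0. -/
def eps0 : ℝ → ℝ := fun x => if 0 < x then 1 else 0

/-- εₐ : the distribution function of the Dirac measure at `a`. -/
def epsAt (a : ℝ) : ℝ → ℝ := fun x => if a < x then 1 else 0

/-- Distance distribution function: non-decreasing, left-continuous,
vanishing on `(-∞,0]`, with values in `[0,1]` and `sup F = 1`. -/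
def IsDDF (F : ℝ → ℝ) : Prop :=
  Monotone F ∧ (∀ x : ℝ, ContinuousWithinAt F (Set.Iio x) x) ∧
  (∀ x ≤ (0:ℝ), F x = 0) ∧ (∀ x, 0 ≤ F x ∧ F x ≤ 1) ∧
  Tendsto F atTop (nhds 1)

/-- Triangle function on Δ⁺: maps Δ⁺ × Δ⁺ into Δ⁺, symmetric, associative,
non-decreasing in each variable, with ε₀ as identity. -/
def IsTriangleFn (τ : (ℝ → ℝ) → (ℝ → ℝ) → (ℝ → ℝ)) : Prop :=
  (∀ G H, IsDDF G → IsDDF H → IsDDF (τ G H)) ∧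
  (∀ G H, τ G H = τ H G) ∧
  (∀ F G H, τ (τ F G) H = τ F (τ G H)) ∧
  (∀ F G H : ℝ → ℝ, F ≤ G → τ F H ≤ τ G H) ∧
  (∀ G, IsDDF G → τ G eps0 = G)

/-- Scalar multiplication `c ⊙ G` on Δ⁺. -/
def smulDDF (c : ℝ) (G : ℝ → ℝ) : ℝ → ℝ := fun x => if c = 0 then eps0 x else G (x / c)

/-- Distributive triangle function: `c ⊙ τ(G,H) = τ(c ⊙ G, c ⊙ H)`. -/
def IsDistributive (τ : (ℝ → ℝ) → (ℝ → ℝ) → (ℝ → ℝ)) : Prop :=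
  ∀ c : ℝ, 0 ≤ c → ∀ G H, smulDDF c (τ G H) = τ (smulDDF c G) (smulDDF c H)

/-- The Sibley (modified Lévy) metric on Δ⁺. -/
def dS (G H : ℝ → ℝ) : ℝ :=
  sInf {h : ℝ | 0 < h ∧ ∀ x ∈ Set.Icc (0:ℝ) (1/h),
    G (x - h) - h ≤ H x ∧ H x ≤ G (x + h) + h}

/-- Iterated τ-sum `⊕_{i} G i` over `Fin n` (empty sum is `ε₀`). -/
def oplus (τ : (ℝ → ℝ) → (ℝ → ℝ) → (ℝ → ℝ)) : ∀ {n : ℕ}, (Fin n → (ℝ → ℝ)) → (ℝ → ℝ)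
  | 0, _ => eps0
  | _ + 1, G => τ (G 0) (oplus τ (fun i => G i.succ))

/-- Partial sums `⊕_{k=0}^{n} G k` of a sequence. -/
def oplusPartial (τ : (ℝ → ℝ) → (ℝ → ℝ) → (ℝ → ℝ)) (G : ℕ → (ℝ → ℝ)) : ℕ → (ℝ → ℝ)
  | 0 => G 0
  | n + 1 => τ (oplusPartial τ G n) (G (n + 1))

/-- A simple non-negative function: finite values on pairwise disjoint measurable sets. -/
structure SimpleFn (S : Set (Set Ω)) where
  n : ℕ
  c : Fin n → ℝ
  A : Fin n → Set Ω
  hc : ∀ i, 0 ≤ c i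
  hA : ∀ i, A i ∈ S
  hdisj : Pairwise (Function.onFun Disjoint A)

def SimpleFn.toFun {Ω : Type*} {S : Set (Set Ω)} (f : SimpleFn S) : Ω → ℝ :=
  fun t => ∑ i, (f.A i).indicator (fun _ => f.c i) t

/-- The γ-integral of a simple function on `E`: `⊕ᵢ xᵢ ⊙ γ_{E∩Eᵢ}`. -/
def SimpleFn.integral {Ω : Type*} {S : Set (Set Ω)} (f : SimpleFn S)
    (τ : (ℝ → ℝ) → (ℝ → ℝ) → (ℝ → ℝ)) (γ : Set Ω → (ℝ → ℝ)) (E : Set Ω) : ℝ → ℝ :=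
  oplus τ (fun i => smulDDF (f.c i) (γ (E ∩ f.A i)))

/-- Left-continuous regularization `𝔊(x) = sup_{x' < x} G(x')`. -/
def lcReg (G : ℝ → ℝ) : ℝ → ℝ := fun x => sSup (G '' Set.Iio x)

/-- `𝔣 ∈ 𝒮_{f,E}` : simple functions below `f` on `E`. -/
def SimpleFn.belowOn {Ω : Type*} {S : Set (Set Ω)} (𝔣 : SimpleFn S)
    (f : Ω → ENNReal) (E : Set Ω) : Prop :=
  ∀ t ∈ E, ENNReal.ofReal (𝔣.toFun t) ≤ f t

/-- `f` is γ-integrable on `E`: the integrals of simple functions below `f`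
are bounded from below by some distance distribution function. -/
def Integrable' {Ω : Type*} {S : Set (Set Ω)}
    (τ : (ℝ → ℝ) → (ℝ → ℝ) → (ℝ → ℝ)) (γ : Set Ω → (ℝ → ℝ))
    (f : Ω → ENNReal) (E : Set Ω) : Prop :=
  ∃ H : ℝ → ℝ, IsDDF H ∧ ∀ 𝔣 : SimpleFn S, 𝔣.belowOn f E → H ≤ 𝔣.integral τ γ E

/-- The γ-integral `∫_E f dγ` : the infimum in (Δ⁺, ≤) of integrals of simple
functions below `f` on `E` (left-continuous regularization of the pointwise infimum). -/
def probIntegral {Ω : Type*} (S : Set (Set Ω))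
    (τ : (ℝ → ℝ) → (ℝ → ℝ) → (ℝ → ℝ)) (γ : Set Ω → (ℝ → ℝ))
    (f : Ω → ENNReal) (E : Set Ω) : ℝ → ℝ :=
  lcReg (fun x => sInf {y | ∃ 𝔣 : SimpleFn S, 𝔣.belowOn f E ∧ 𝔣.integral τ γ E x = y})

open Classical in
/-- The Lebesgue–Stieltjes measure of a monotone function (junk value otherwise). -/
def lsMeasure (H : ℝ → ℝ) : Measure ℝ :=
  if h : Monotone H then h.stieltjesFunction.measure else 0

/-- Convolution `(G * H)(x) = ∫₀ˣ G(x−t) dH(t)` (Lebesgue–Stieltjes). -/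
def conv (G H : ℝ → ℝ) : ℝ → ℝ := fun x =>
  if 0 < x then ∫ t in Set.Icc (0:ℝ) x, G (x - t) ∂(lsMeasure H) else 0

/-- `τ_{L,M}(G,H)(x) = sup_{L(u,v)=x} min(G(u),H(v))`. -/
def tauLM (L : ℝ → ℝ → ℝ) (G H : ℝ → ℝ) : ℝ → ℝ := fun x =>
  sSup {t | ∃ u v : ℝ, 0 ≤ u ∧ 0 ≤ v ∧ L u v = x ∧ t = min (G u) (H v)}

/-- Pseudo-addition on `[0,∞)`: commutative, associative, jointly strictly
increasing, continuous, with neutral element 0. -/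
def IsPseudoAddition (L : ℝ → ℝ → ℝ) : Prop :=
  (∀ u v, 0 ≤ u → 0 ≤ v → L u v = L v u) ∧
  (∀ u v w, 0 ≤ u → 0 ≤ v → 0 ≤ w → L (L u v) w = L u (L v w)) ∧
  (∀ u₁ u₂ v₁ v₂, 0 ≤ u₁ → 0 ≤ v₁ → u₁ < u₂ → v₁ < v₂ → L u₁ v₁ < L u₂ v₂) ∧
  Continuous (fun p : ℝ × ℝ => L p.1 p.2) ∧
  (∀ u, 0 ≤ u → L 0 u = u ∧ L u 0 = u)

/-- γ is a τ-decomposable measure on the ring S. -/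
def IsDecomposable {Ω : Type*} (S : Set (Set Ω))
    (τ : (ℝ → ℝ) → (ℝ → ℝ) → (ℝ → ℝ)) (γ : Set Ω → (ℝ → ℝ)) : Prop :=
  γ ∅ = eps0 ∧ ∀ E F : Set Ω, E ∈ S → F ∈ S → Disjoint E F → γ (E ∪ F) = τ (γ E) (γ F)

/-- γ is continuous from below: `γ_{E_n} → γ_E` weakly (in the Sibley metric)
whenever `E_n ↗ E`. -/
def ContinuousFromBelow {Ω : Type*} (S : Set (Set Ω)) (γ : Set Ω → (ℝ → ℝ)) : Prop :=
  ∀ E : ℕ → Set Ω, (∀ n, E n ∈ S) → Monotone E → (⋃ n, E n) ∈ S →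
    Tendsto (fun n => dS (γ (E n)) (γ (⋃ n, E n))) atTop (nhds 0)

/-- Sequential continuity of a triangle function w.r.t. the Sibley metric. -/
def IsContinuousTriangle (τ : (ℝ → ℝ) → (ℝ → ℝ) → (ℝ → ℝ)) : Prop :=
  ∀ (G H : ℝ → ℝ) (Gn Hn : ℕ → (ℝ → ℝ)), IsDDF G → IsDDF H → (∀ n, IsDDF (Gn n)) →
    (∀ n, IsDDF (Hn n)) →
    Tendsto (fun n => dS (Gn n) G) atTop (nhds 0) →
    Tendsto (fun n => dS (Hn n) H) atTop (nhds 0) →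
    Tendsto (fun n => dS (τ (Gn n) (Hn n)) (τ G H)) atTop (nhds 0)


/-! ### Auxiliary lemmas for Statement 14 -/

lemma eps0_isDDF : IsDDF eps0 := by
  refine ⟨?_, ?_, ?_, ?_, ?_⟩
  · intro a b hab
    simp only [eps0]
    split_ifs with h1 h2
    · exact le_refl _
    · exact absurd (h1.trans_le hab) h2
    · exact zero_le_one
    · exact le_refl _
  · intro x
    rcases le_or_gt x 0 with hx | hx
    · refine Filter.Tendsto.congr' ?_ tendsto_const_nhds
      filter_upwards [self_mem_nhdsWithin] with y hy
      simp only [eps0, if_neg (not_lt.2 hx), if_neg (not_lt.2 ((le_of_lt hy).trans hx))]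
    · refine Filter.Tendsto.congr' ?_ tendsto_const_nhds
      filter_upwards [Ioo_mem_nhdsLT_of_mem ⟨hx, le_refl x⟩] with y hy
      simp only [eps0, if_pos hx, if_pos hy.1]
  · intro x hx; simp [eps0, not_lt.2 hx]
  · intro x; unfold eps0; split_ifs <;> norm_num
  · refine Filter.Tendsto.congr' ?_ tendsto_const_nhds
    filter_upwards [eventually_ge_atTop (1 : ℝ)] with y hy
    simp [eps0, lt_of_lt_of_le one_pos hy]

lemma smulDDF_zero (G : ℝ → ℝ) : smulDDF 0 G = eps0 := by
  funext x; simp [smulDDF]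

lemma smulDDF_eps0 {c : ℝ} (hc : 0 ≤ c) : smulDDF c eps0 = eps0 := by
  rcases eq_or_lt_of_le hc with h | h
  · rw [← h, smulDDF_zero]
  · funext x
    have hx : (0 < x / c) ↔ 0 < x := by
      rw [lt_div_iff₀ h, zero_mul]
    simp only [smulDDF, if_neg h.ne', eps0, hx]

lemma smulDDF_smulDDF {c d : ℝ} (hc : 0 ≤ c) (hd : 0 ≤ d) (G : ℝ → ℝ) :
    smulDDF c (smulDDF d G) = smulDDF (c * d) G := by
  rcases eq_or_lt_of_le hc with h | h
  · rw [← h, smulDDF_zero, zero_mul, smulDDF_zero]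
  · rcases eq_or_lt_of_le hd with h' | h'
    · rw [← h', smulDDF_zero, smulDDF_eps0 hc, mul_zero, smulDDF_zero]
    · funext x
      simp only [smulDDF, if_neg h.ne', if_neg h'.ne',
        if_neg (mul_pos h h').ne', div_div]

lemma oplus_smul {τ : (ℝ → ℝ) → (ℝ → ℝ) → (ℝ → ℝ)} (hd : IsDistributive τ)
    {c : ℝ} (hc : 0 ≤ c) : ∀ {n : ℕ} (G : Fin n → (ℝ → ℝ)),
    smulDDF c (oplus τ G) = oplus τ (fun i => smulDDF c (G i))
  | 0, G => by simp only [oplus]; exact smulDDF_eps0 hc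
  | n + 1, G => by
      simp only [oplus]
      rw [hd c hc, oplus_smul hd hc]

lemma oplus_eps0 {τ : (ℝ → ℝ) → (ℝ → ℝ) → (ℝ → ℝ)} (hτ : IsTriangleFn τ) :
    ∀ {n : ℕ} (G : Fin n → (ℝ → ℝ)), (∀ i, G i = eps0) → oplus τ G = eps0
  | 0, G, _ => by simp only [oplus]
  | n + 1, G, h => by
      simp only [oplus]
      rw [h 0, oplus_eps0 hτ _ (fun i => h i.succ)]
      exact hτ.2.2.2.2 eps0 eps0_isDDF

lemma lcReg_eps0 : lcReg eps0 = eps0 := by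
  funext x
  rcases le_or_gt x 0 with hx | hx
  · have himg : eps0 '' Set.Iio x = {0} := by
      apply Set.Subset.antisymm
      · rintro y ⟨v, hv, rfl⟩
        simp [eps0, not_lt.2 ((le_of_lt hv).trans hx)]
      · rintro y rfl
        exact ⟨x - 1, by simp, by simp [eps0, not_lt.2 (by linarith : x - 1 ≤ 0)]⟩
    rw [show lcReg eps0 x = sSup (eps0 '' Set.Iio x) from rfl, himg, csSup_singleton]
    simp [eps0, not_lt.2 hx]
  · have h1 : (1 : ℝ) ∈ eps0 '' Set.Iio x :=
      ⟨x / 2, by simp [half_lt_self hx], by simp [eps0, half_pos hx]⟩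
    have hub : ∀ y ∈ eps0 '' Set.Iio x, y ≤ 1 := by
      rintro y ⟨v, _, rfl⟩
      unfold eps0; split_ifs <;> norm_num
    have : sSup (eps0 '' Set.Iio x) = 1 :=
      le_antisymm (csSup_le ⟨1, h1⟩ hub) (le_csSup ⟨1, hub⟩ h1)
    rw [show lcReg eps0 x = sSup (eps0 '' Set.Iio x) from rfl, this]
    simp [eps0, hx]

/-- Scaling of a simple function by a nonnegative constant. -/
def SimpleFn.smulFn {Ω : Type*} {S : Set (Set Ω)} (𝔣 : SimpleFn S) (c : ℝ) (hc : 0 ≤ c) :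
    SimpleFn S :=
  ⟨𝔣.n, fun i => c * 𝔣.c i, 𝔣.A, fun i => mul_nonneg hc (𝔣.hc i), 𝔣.hA, 𝔣.hdisj⟩

lemma SimpleFn.smulFn_toFun {Ω : Type*} {S : Set (Set Ω)} (𝔣 : SimpleFn S) (c : ℝ)
    (hc : 0 ≤ c) (t : Ω) : (𝔣.smulFn c hc).toFun t = c * 𝔣.toFun t := by
  simp only [SimpleFn.toFun, SimpleFn.smulFn, Finset.mul_sum]
  refine Finset.sum_congr rfl fun i _ => ?_
  by_cases h : t ∈ 𝔣.A i <;> simp [Set.indicator_apply, h]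

lemma SimpleFn.smulFn_integral {Ω : Type*} {S : Set (Set Ω)} (𝔣 : SimpleFn S)
    {τ : (ℝ → ℝ) → (ℝ → ℝ) → (ℝ → ℝ)} (hd : IsDistributive τ) (γ : Set Ω → (ℝ → ℝ))
    (E : Set Ω) {c : ℝ} (hc : 0 ≤ c) :
    (𝔣.smulFn c hc).integral τ γ E = smulDDF c (𝔣.integral τ γ E) := by
  unfold SimpleFn.integral
  rw [oplus_smul hd hc]
  exact congrArg (oplus τ) (funext fun i => (smulDDF_smulDDF hc (𝔣.hc i) _).symm)

/-- The trivial (empty) simple function. -/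
def SimpleFn.zeroFn {Ω : Type*} (S : Set (Set Ω)) : SimpleFn S :=
  ⟨0, Fin.elim0, Fin.elim0, fun i => i.elim0, fun i => i.elim0, fun i => i.elim0⟩

lemma SimpleFn.zeroFn_toFun {Ω : Type*} (S : Set (Set Ω)) (t : Ω) :
    (SimpleFn.zeroFn S).toFun t = 0 := by
  simp [SimpleFn.toFun, SimpleFn.zeroFn]
  exact Finset.sum_eq_zero fun i _ => i.elim0

lemma SimpleFn.zeroFn_integral {Ω : Type*} (S : Set (Set Ω))
    (τ : (ℝ → ℝ) → (ℝ → ℝ) → (ℝ → ℝ)) (γ : Set Ω → (ℝ → ℝ)) (E : Set Ω) :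
    (SimpleFn.zeroFn S).integral τ γ E = eps0 := by
  simp [SimpleFn.integral, SimpleFn.zeroFn, oplus]

/-- the γ-integral is positively homogeneous:
∫_E (c·f) dγ = c ⊙ ∫_E f dγ. -/
theorem stmt14 {Ω : Type*} (S : Set (Set Ω)) (hS : MeasureTheory.IsSetRing S)
    (τ : (ℝ → ℝ) → (ℝ → ℝ) → (ℝ → ℝ)) (hτ : IsTriangleFn τ) (hd : IsDistributive τ)
    (γ : Set Ω → (ℝ → ℝ)) (hmem : ∀ E ∈ S, IsDDF (γ E)) (hγ : IsDecomposable S τ γ)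
    (f : Ω → ENNReal) (E : Set Ω) (hE : E ∈ S)
    (hf : Integrable' (S := S) τ γ f E) (c : ℝ) (hc : 0 ≤ c) :
    probIntegral S τ γ (fun t => ENNReal.ofReal c * f t) E =
      smulDDF c (probIntegral S τ γ f E) := by
  rcases eq_or_lt_of_le hc with hc0 | hcpos
  · -- the case c = 0
    subst hc0
    have hker : ∀ 𝔣 : SimpleFn S,
        𝔣.belowOn (fun t => ENNReal.ofReal 0 * f t) E → 𝔣.integral τ γ E = eps0 := by
      intro 𝔣 hb
      have hterm : ∀ i, smulDDF (𝔣.c i) (γ (E ∩ 𝔣.A i)) = eps0 := by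
        intro i
        by_cases hne : (E ∩ 𝔣.A i).Nonempty
        · obtain ⟨t, htE, htA⟩ := hne
          have h1 : 𝔣.c i ≤ 𝔣.toFun t := by
            have := Finset.single_le_sum
              (f := fun j => (𝔣.A j).indicator (fun _ => 𝔣.c j) t)
              (fun j _ => Set.indicator_nonneg (fun _ _ => 𝔣.hc j) t) (Finset.mem_univ i)
            simpa [SimpleFn.toFun, Set.indicator_of_mem htA] using this
          have h2 := hb t htE
          simp only [ENNReal.ofReal_zero, zero_mul, nonpos_iff_eq_zero,
            ENNReal.ofReal_eq_zero] at h2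
          have hci : 𝔣.c i = 0 := le_antisymm (h1.trans h2) (𝔣.hc i)
          rw [hci, smulDDF_zero]
        · rw [Set.not_nonempty_iff_eq_empty.1 hne, hγ.1, smulDDF_eps0 (𝔣.hc i)]
      unfold SimpleFn.integral
      exact oplus_eps0 hτ _ hterm
    have hJ : (fun x => sInf {y | ∃ 𝔣 : SimpleFn S,
        𝔣.belowOn (fun t => ENNReal.ofReal 0 * f t) E ∧ 𝔣.integral τ γ E x = y}) = eps0 := by
      funext x
      have hset : {y | ∃ 𝔣 : SimpleFn S,
          𝔣.belowOn (fun t => ENNReal.ofReal 0 * f t) E ∧ 𝔣.integral τ γ E x = y}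
          = {eps0 x} := by
        ext y
        constructor
        · rintro ⟨𝔣, hb, rfl⟩
          rw [hker 𝔣 hb]
          exact Set.mem_singleton _
        · intro hy
          rw [Set.mem_singleton_iff] at hy
          subst hy
          exact ⟨SimpleFn.zeroFn S, fun t _ => by simp [SimpleFn.zeroFn_toFun],
            by rw [SimpleFn.zeroFn_integral]⟩
      rw [hset, csInf_singleton]
    unfold probIntegral
    rw [hJ, lcReg_eps0, smulDDF_zero]
  · -- the case c > 0
    have hcne : c ≠ 0 := hcpos.ne'
    have hofc : ENNReal.ofReal c ≠ 0 := by
      simp [ENNReal.ofReal_eq_zero, not_le, hcpos]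
    have hset : ∀ x : ℝ,
        {y | ∃ 𝔣 : SimpleFn S,
          𝔣.belowOn (fun t => ENNReal.ofReal c * f t) E ∧ 𝔣.integral τ γ E x = y}
        = {y | ∃ 𝔣 : SimpleFn S, 𝔣.belowOn f E ∧ 𝔣.integral τ γ E (x / c) = y} := by
      intro x
      ext y
      constructor
      · rintro ⟨𝔤, hb, rfl⟩
        refine ⟨𝔤.smulFn c⁻¹ (by positivity), ?_, ?_⟩
        · intro t ht
          have h1 := hb t ht
          rw [SimpleFn.smulFn_toFun, ENNReal.ofReal_mul (by positivity),
            ENNReal.ofReal_inv_of_pos hcpos]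
          calc (ENNReal.ofReal c)⁻¹ * ENNReal.ofReal (𝔤.toFun t)
              ≤ (ENNReal.ofReal c)⁻¹ * (ENNReal.ofReal c * f t) := mul_le_mul_right h1 _
            _ = f t := by
                rw [← mul_assoc, ENNReal.inv_mul_cancel hofc ENNReal.ofReal_ne_top, one_mul]
        · rw [SimpleFn.smulFn_integral 𝔤 hd γ E (by positivity)]
          simp only [smulDDF, if_neg (inv_ne_zero hcne)]
          rw [show x / c / c⁻¹ = x by field_simp]
      · rintro ⟨𝔣, hb, rfl⟩
        refine ⟨𝔣.smulFn c hc, ?_, ?_⟩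
        · intro t ht
          rw [SimpleFn.smulFn_toFun, ENNReal.ofReal_mul hc]
          exact mul_le_mul_right (hb t ht) _
        · rw [SimpleFn.smulFn_integral 𝔣 hd γ E hc]
          simp only [smulDDF, if_neg hcne]
    funext x
    unfold probIntegral lcReg
    simp only [smulDDF, if_neg hcne]
    have himg : (fun x' : ℝ => x' / c) '' Set.Iio x = Set.Iio (x / c) := by
      ext u
      constructor
      · rintro ⟨v, hv, rfl⟩
        exact div_lt_div_of_pos_right hv hcpos
      · intro hu
        exact ⟨u * c, (lt_div_iff₀ hcpos).1 hu, mul_div_cancel_right₀ u hcne⟩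
    have hfun : (fun x' => sInf {y | ∃ 𝔣 : SimpleFn S,
          𝔣.belowOn (fun t => ENNReal.ofReal c * f t) E ∧ 𝔣.integral τ γ E x' = y})
        = (fun x' => sInf {y | ∃ 𝔣 : SimpleFn S,
          𝔣.belowOn f E ∧ 𝔣.integral τ γ E x' = y}) ∘ (fun x' : ℝ => x' / c) := by
      funext v
      simp only [Function.comp_apply]
      rw [hset v]
    rw [hfun, Set.image_comp, himg]

end
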